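/- Let 𝔐 be a finitely generated 𝔖-module with a φ-semilinear endomorphism φ_𝔐 : 𝔐 → 𝔐. Call an 𝔖-module with φ-semilinear endomorphism 'multiplicative' if the 𝔖-submodule generated by the image of its Frobenius endomorphism is the whole module (i.e. the linearized Frobenius 1⊗φ is surjective). Then there exists an 𝔖-submodule 𝔐^m ⊆ 𝔐 with φ_𝔐(𝔐^m) ⊆ 𝔐^m such that: (a) 𝔐^m with the restricted Frobenius is multiplicative (the 𝔖-span of φ_𝔐(𝔐^m) equals 𝔐^m); (b) the quotient 𝔐^n := 𝔐/𝔐^m, with the induced Frobenius, has no nonzero multiplicative submodule, i.e. no nonzero 𝔖-submodule Q ⊆ 𝔐^n whose 𝔖-span of the image of the induced Frobenius equals Q. Moreover, if 𝔐 is u-torsion free then both 𝔐^m and 𝔐^n are u-torsion free. -/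

import Mathlib

open PowerSeries

section RingAux

variable {p : ℕ} [Fact p.Prime] {k : Type*} [Field k] [CharP k p] [PerfectField k]
variable (φ : PowerSeries (WittVector p k) →+* PowerSeries (WittVector p k))
  (hφu : φ PowerSeries.X = PowerSeries.X ^ p)
  (hφC : ∀ a : WittVector p k,
    φ (PowerSeries.C (R := WittVector p k) a) = PowerSeries.C (R := WittVector p k) (WittVector.frobenius a))

local notation "W" => WittVector p k
local notation "𝔖" => PowerSeries (WittVector p k)

include hφu hφC in
/-- The master formula for `φ`. -/
theorem phi_formula (f : 𝔖) :
    φ f = PowerSeries.mk (fun j => if p ∣ j then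
      WittVector.frobenius ((PowerSeries.coeff (R := W) (j / p)) f) else 0) := by
  have hp : 0 < p := (Fact.out : p.Prime).pos
  set RHS := PowerSeries.mk (fun j => if p ∣ j then
      WittVector.frobenius ((PowerSeries.coeff (R := W) (j / p)) f) else 0) with hRHS
  have key : ∀ N : ℕ, (X : 𝔖) ^ N ∣ (φ f - RHS) := by
    intro N
    set fN : 𝔖 := ∑ i ∈ Finset.range N, PowerSeries.C (R := W) ((PowerSeries.coeff (R := W) i) f) * X ^ i
      with hfN
    have hcoefffN : ∀ m, (PowerSeries.coeff (R := W) m) fN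
        = if m < N then (PowerSeries.coeff (R := W) m) f else 0 := by
      intro m
      rw [hfN, map_sum]
      by_cases hm : m < N
      · rw [Finset.sum_eq_single m]
        · simp [PowerSeries.coeff_C_mul, PowerSeries.coeff_X_pow, hm]
        · intro b _ hbm
          simp [PowerSeries.coeff_C_mul, PowerSeries.coeff_X_pow, Ne.symm hbm]
        · intro hmm; exact absurd (Finset.mem_range.mpr hm) hmm
      · rw [if_neg hm]
        apply Finset.sum_eq_zero
        intro b hb
        have : m ≠ b := by
          intro h; exact hm (h ▸ Finset.mem_range.mp hb)
        simp [PowerSeries.coeff_C_mul, PowerSeries.coeff_X_pow, this]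
    obtain ⟨g, hg⟩ : (X : 𝔖) ^ N ∣ (f - fN) := by
      rw [PowerSeries.X_pow_dvd_iff]
      intro m hm
      simp [hcoefffN m, hm]
    have hf : f = fN + X ^ N * g := by rw [← hg]; ring
    have hφfN : φ fN = ∑ i ∈ Finset.range N,
        PowerSeries.C (R := W) (WittVector.frobenius ((PowerSeries.coeff (R := W) i) f)) * X ^ (p * i) := by
      rw [hfN, map_sum]
      refine Finset.sum_congr rfl fun i _ => ?_
      rw [map_mul, map_pow, hφC, hφu, ← pow_mul]
    have hdvd2 : (X : 𝔖) ^ N ∣ (RHS - φ fN) := by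
      rw [PowerSeries.X_pow_dvd_iff]
      intro m hm
      rw [map_sub, hφfN, map_sum, hRHS, PowerSeries.coeff_mk]
      by_cases hdvd : p ∣ m
      · rw [if_pos hdvd, Finset.sum_eq_single (m / p)]
        · rw [PowerSeries.coeff_C_mul, PowerSeries.coeff_X_pow,
            if_pos (Nat.eq_mul_of_div_eq_right hdvd rfl ▸ rfl : m = p * (m / p)), mul_one,
            sub_self]
        · intro b _ hbm
          rw [PowerSeries.coeff_C_mul, PowerSeries.coeff_X_pow, if_neg, mul_zero]
          intro hmb
          exact hbm (by rw [hmb, Nat.mul_div_cancel_left _ hp])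
        · intro hmem
          exact absurd (Finset.mem_range.mpr (lt_of_le_of_lt (Nat.div_le_self m p) hm)) hmem
      · rw [if_neg hdvd, Finset.sum_eq_zero, sub_zero]
        intro b _
        rw [PowerSeries.coeff_C_mul, PowerSeries.coeff_X_pow, if_neg, mul_zero]
        intro hmb
        exact hdvd ⟨b, hmb⟩
    have : φ f - RHS = X ^ (p * N) * φ g - (RHS - φ fN) := by
      rw [hf, map_add, map_mul, map_pow, hφu, ← pow_mul]
      ring
    rw [this]
    exact dvd_sub (Dvd.dvd.mul_right (pow_dvd_pow _ (Nat.le_mul_of_pos_left N hp)) _) hdvd2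
  refine PowerSeries.ext fun j => ?_
  have := key (j + 1)
  rw [PowerSeries.X_pow_dvd_iff] at this
  have h0 := this j (Nat.lt_succ_self j)
  rw [map_sub, sub_eq_zero] at h0
  exact h0


include hφu hφC in
/-- Every power series decomposes as `∑_{t<p} X^t φ(a_t)`. -/
theorem phi_decomp (f : 𝔖) : ∃ a : ℕ → 𝔖,
    f = ∑ t ∈ Finset.range p, (X : 𝔖) ^ t * φ (a t) := by
  have hp : 0 < p := (Fact.out : p.Prime).pos
  refine ⟨fun t => PowerSeries.mk fun i =>
    (WittVector.frobeniusEquiv p k).symm ((PowerSeries.coeff (R := W) (t + p * i)) f), ?_⟩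
  refine PowerSeries.ext fun j => ?_
  rw [map_sum]
  rw [Finset.sum_eq_single_of_mem (j % p) (Finset.mem_range.mpr (Nat.mod_lt _ hp))]
  · rw [PowerSeries.coeff_X_pow_mul' _ _ _, if_pos (Nat.mod_le j p)]
    rw [phi_formula φ hφu hφC, PowerSeries.coeff_mk]
    have hdm := Nat.div_add_mod j p
    have hd : p ∣ (j - j % p) := ⟨j / p, by omega⟩
    rw [if_pos hd, PowerSeries.coeff_mk]
    have h1 : (j - j % p) / p = j / p := by
      have h1' : j - j % p = p * (j / p) := by omega
      rw [h1', Nat.mul_div_cancel_left _ hp]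
    rw [h1]
    have h2 : j % p + p * (j / p) = j := by omega
    rw [h2]
    rw [show (WittVector.frobenius : WittVector p k → WittVector p k)
        = ⇑(WittVector.frobeniusEquiv p k) from (WittVector.frobeniusEquiv_apply p k).symm]
    exact ((WittVector.frobeniusEquiv p k).apply_symm_apply _).symm
  · intro t ht htj
    rw [PowerSeries.coeff_X_pow_mul' _ _ _]
    by_cases hle : t ≤ j
    · rw [if_pos hle, phi_formula φ hφu hφC, PowerSeries.coeff_mk, if_neg]
      intro ⟨s, hs⟩
      apply htj
      have : j = t + p * s := by omega
      rw [this, Nat.add_mul_mod_self_left, Nat.mod_eq_of_lt (Finset.mem_range.mp ht)]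
    · rw [if_neg hle]

variable (M : Type*) [AddCommGroup M] [Module (PowerSeries (WittVector p k)) M]
  (φM : M →+ M)
  (hφM : ∀ (f : PowerSeries (WittVector p k)) (x : M), φM (f • x) = φ f • φM x)

/-- iterate of φ as ring hom -/
noncomputable def iterR : ℕ → (𝔖 →+* 𝔖) := fun n => Nat.rec (RingHom.id 𝔖) (fun _ ih => φ.comp ih) n

/-- iterate of φM -/
def iterM : ℕ → (M →+ M) := fun n => Nat.rec (AddMonoidHom.id M) (fun _ ih => φM.comp ih) n

@[simp] lemma iterR_zero (f : 𝔖) : iterR φ 0 f = f := rfl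
@[simp] lemma iterR_succ (n : ℕ) (f : 𝔖) : iterR φ (n+1) f = φ (iterR φ n f) := rfl
@[simp] lemma iterM_zero (x : M) : iterM M φM 0 x = x := rfl
@[simp] lemma iterM_succ (n : ℕ) (x : M) :
    iterM M φM (n+1) x = φM (iterM M φM n x) := rfl

include hφM in
lemma iterM_smul (n : ℕ) (f : 𝔖) (x : M) :
    iterM M φM n (f • x) = iterR φ n f • iterM M φM n x := by
  induction n with
  | zero => rfl
  | succ n ih => rw [iterM_succ, ih, hφM, iterR_succ, iterM_succ]

include hφC in
lemma iterR_C (n : ℕ) (a : WittVector p k) :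
    iterR φ n (PowerSeries.C (R := W) a) = PowerSeries.C (R := W) ((⇑WittVector.frobenius)^[n] a) := by
  induction n with
  | zero => rfl
  | succ n ih => rw [iterR_succ, ih, hφC, Function.iterate_succ_apply']

lemma frob_iter_inv (n : ℕ) (a : WittVector p k) :
    (⇑(WittVector.frobenius : WittVector p k →+* WittVector p k))^[n]
      ((⇑(WittVector.frobeniusEquiv p k).symm)^[n] a) = a := by
  induction n generalizing a with
  | zero => rfl
  | succ n ih =>
    rw [Function.iterate_succ_apply (⇑(WittVector.frobeniusEquiv p k).symm),
      Function.iterate_succ_apply' (⇑(WittVector.frobenius : WittVector p k →+* WittVector p k))]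
    have h1 : (WittVector.frobenius : WittVector p k →+* WittVector p k)
        ((WittVector.frobeniusEquiv p k).symm a)
        = (WittVector.frobeniusEquiv p k) ((WittVector.frobeniusEquiv p k).symm a) := by
      rw [WittVector.frobeniusEquiv_apply]
    rw [ih, h1, (WittVector.frobeniusEquiv p k).apply_symm_apply]

variable (p k) in
/-- The submodule `X • M`. -/
noncomputable def UU : Submodule 𝔖 M := LinearMap.range (LinearMap.lsmul 𝔖 M X)

lemma mem_UU {z : M} : z ∈ UU p k M ↔ ∃ w : M, (X : 𝔖) • w = z := by
  constructor
  · rintro ⟨w, rfl⟩; exact ⟨w, rfl⟩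
  · rintro ⟨w, rfl⟩; exact ⟨w, rfl⟩

lemma smul_mem_UU (w : M) : (X : 𝔖) • w ∈ UU p k M := ⟨w, rfl⟩

lemma pow_smul_mem_UU {m : ℕ} (hm : 1 ≤ m) (w : M) : (X : 𝔖) ^ m • w ∈ UU p k M := by
  obtain ⟨l, rfl⟩ := Nat.exists_eq_add_of_le hm
  rw [pow_add, pow_one, mul_smul]
  exact smul_mem_UU (p := p) (k := k) M _

include hφM hφu in
lemma phiM_mem_UU {z : M} (hz : z ∈ UU p k M) : φM z ∈ UU p k M := by
  obtain ⟨w, rfl⟩ := (mem_UU M).mp hz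
  rw [hφM, hφu]
  exact pow_smul_mem_UU M (Fact.out : p.Prime).pos _

include hφM in
lemma phiM_mem_span {s : Set M} {x : M} (hx : x ∈ Submodule.span 𝔖 s) :
    φM x ∈ Submodule.span 𝔖 (⇑φM '' s) := by
  induction hx using Submodule.span_induction with
  | mem y hy => exact Submodule.subset_span (Set.mem_image_of_mem _ hy)
  | zero => rw [map_zero]; exact Submodule.zero_mem _
  | add y z _ _ hy hz => rw [map_add]; exact Submodule.add_mem _ hy hz
  | smul f y _ hy => rw [hφM]; exact Submodule.smul_mem _ _ hy

include hφM in
lemma span_phi_span (s : Set M) :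
    Submodule.span 𝔖 (⇑φM '' (Submodule.span 𝔖 s : Set M)) = Submodule.span 𝔖 (⇑φM '' s) := by
  refine le_antisymm (Submodule.span_le.mpr ?_) (Submodule.span_mono (Set.image_mono
    Submodule.subset_span))
  rintro y ⟨x, hx, rfl⟩
  exact phiM_mem_span φ M φM hφM hx

include hφM in
lemma le_span_iter {A : Submodule 𝔖 M}
    (hA : A ≤ Submodule.span 𝔖 (⇑φM '' (A : Set M))) (n : ℕ) :
    A ≤ Submodule.span 𝔖 (⇑(iterM M φM n) '' (A : Set M)) := by
  induction n with
  | zero =>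
    intro x hx
    exact Submodule.subset_span ⟨x, hx, rfl⟩
  | succ n ih =>
    refine le_trans hA ?_
    intro y hy
    have h1 : φM '' (A : Set M) ⊆
        ⇑φM '' (Submodule.span 𝔖 (⇑(iterM M φM n) '' (A : Set M)) : Set M) :=
      Set.image_mono ih
    have h2 := Submodule.span_mono h1 hy
    rw [span_phi_span φ M φM hφM] at h2
    rw [Set.image_image] at h2
    refine Submodule.span_mono ?_ h2
    rintro z ⟨x, hx, rfl⟩
    exact ⟨x, hx, rfl⟩

include hφu hφC hφM in
/-- Stabilization of the kernels of iterates of `φM` modulo `X•M`. -/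
lemma ker_iter_stab [Module.Finite (PowerSeries (WittVector p k)) M] :
    ∃ n : ℕ, ∀ x : M,
      iterM M φM (n+1) x ∈ UU p k M → iterM M φM n x ∈ UU p k M := by
  classical
  -- quotient module
  set U := UU p k M with hU
  letI instW : Module (WittVector p k) (M ⧸ U) :=
    Module.compHom (M ⧸ U) (PowerSeries.C (R := WittVector p k))
  have hsmulW : ∀ (c : WittVector p k) (y : M ⧸ U),
      c • y = (PowerSeries.C (R := WittVector p k) c) • y := fun _ _ => rfl
  -- φ descends to the quotient
  let φs : M →ₛₗ[φ] M := ⟨⟨⇑φM, φM.map_add⟩, fun f x => hφM f x⟩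
  have hUst : U ≤ Submodule.comap φs U := by
    intro z hz
    exact phiM_mem_UU φ hφu M φM hφM hz
  let φb : (M ⧸ U) →ₛₗ[φ] (M ⧸ U) := Submodule.mapQ U U φs hUst
  have hφb : ∀ x : M, φb (Submodule.Quotient.mk x) = Submodule.Quotient.mk (φM x) :=
    fun x => rfl
  have hφbW : ∀ (c : WittVector p k) (y : M ⧸ U),
      φb (c • y) = (WittVector.frobenius c) • φb y := by
    intro c y
    rw [hsmulW, LinearMap.map_smulₛₗ, hφC, ← hsmulW]
  have hXkill : ∀ y : M ⧸ U, (PowerSeries.X : PowerSeries (WittVector p k)) • y = 0 := by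
    intro y
    obtain ⟨x, rfl⟩ := Submodule.Quotient.mk_surjective U y
    rw [← Submodule.Quotient.mk_smul, Submodule.Quotient.mk_eq_zero]
    exact smul_mem_UU M x
  -- finiteness over W(k)
  haveI : Module.Finite (PowerSeries (WittVector p k)) (M ⧸ U) :=
    Module.Finite.of_surjective U.mkQ (Submodule.Quotient.mk_surjective U)
  obtain ⟨s, hs⟩ := Module.Finite.fg_top (R := PowerSeries (WittVector p k)) (M := M ⧸ U)
  haveI : Module.Finite (WittVector p k) (M ⧸ U) := by
    have key : ∀ y : M ⧸ U, y ∈ Submodule.span (PowerSeries (WittVector p k)) (s : Set (M ⧸ U)) →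
        y ∈ Submodule.span (WittVector p k) (s : Set (M ⧸ U)) := by
      intro y hy
      induction hy using Submodule.span_induction with
      | mem z hz => exact Submodule.subset_span hz
      | zero => exact Submodule.zero_mem _
      | add a b _ _ ha hb => exact Submodule.add_mem _ ha hb
      | smul f a _ ha =>
        obtain ⟨g, hg⟩ : (PowerSeries.X : PowerSeries (WittVector p k)) ∣
            (f - PowerSeries.C (R := WittVector p k) (PowerSeries.constantCoeff f)) := by
          rw [PowerSeries.X_dvd_iff, map_sub, PowerSeries.constantCoeff_C, sub_self]
        have hf : f = PowerSeries.C (R := WittVector p k) (PowerSeries.constantCoeff f)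
            + PowerSeries.X * g := by rw [← hg]; ring
        have h2 : f • a = (PowerSeries.constantCoeff f) • a := by
          conv_lhs => rw [hf]
          rw [add_smul, mul_smul, hXkill, add_zero, ← hsmulW]
        rw [h2]
        exact Submodule.smul_mem _ _ ha
    refine ⟨⟨s, ?_⟩⟩
    rw [eq_top_iff]
    intro y _
    exact key y (by rw [hs]; trivial)
  haveI : IsDiscreteValuationRing (WittVector p k) := WittVector.isDiscreteValuationRing
  haveI : IsNoetherian (WittVector p k) (M ⧸ U) :=
    isNoetherian_of_isNoetherianRing_of_finite (WittVector p k) (M ⧸ U)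
  -- iterates of φb
  have hφbiter : ∀ (i : ℕ) (x : M),
      (⇑φb)^[i] (Submodule.Quotient.mk x) = Submodule.Quotient.mk (iterM M φM i x) := by
    intro i
    induction i with
    | zero => intro x; rfl
    | succ i ih =>
      intro x
      rw [Function.iterate_succ_apply', ih, iterM_succ, hφb]
  have hφbiterW : ∀ (i : ℕ) (c : WittVector p k) (y : M ⧸ U),
      (⇑φb)^[i] (c • y) = ((⇑WittVector.frobenius)^[i] c) • (⇑φb)^[i] y := by
    intro i
    induction i with
    | zero => intro c y; rfl
    | succ i ih =>
      intro c y
      rw [Function.iterate_succ_apply', ih, hφbW, Function.iterate_succ_apply',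
        Function.iterate_succ_apply']
  -- the chain of kernels
  have hmono : ∀ i : ℕ, ∀ y : M ⧸ U, (⇑φb)^[i] y = 0 → (⇑φb)^[i+1] y = 0 := by
    intro i y hy
    rw [Function.iterate_succ_apply', hy, map_zero]
  let Kb : ℕ →o Submodule (WittVector p k) (M ⧸ U) :=
    ⟨fun i =>
      { carrier := {y | (⇑φb)^[i] y = 0}
        add_mem' := by
          intro a b ha hb
          simp only [Set.mem_setOf_eq] at *
          have : ∀ j : ℕ, ∀ a b : M ⧸ U, (⇑φb)^[j] (a + b) = (⇑φb)^[j] a + (⇑φb)^[j] b := by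
            intro j
            induction j with
            | zero => intro a b; rfl
            | succ j ih =>
              intro a b
              rw [Function.iterate_succ_apply', ih, map_add, Function.iterate_succ_apply',
                Function.iterate_succ_apply']
          rw [this, ha, hb, add_zero]
        zero_mem' := by
          have : ∀ j : ℕ, (⇑φb)^[j] (0 : M ⧸ U) = 0 := by
            intro j
            induction j with
            | zero => rfl
            | succ j ih => rw [Function.iterate_succ_apply', ih, map_zero]
          exact this i
        smul_mem' := by
          intro c y hy
          simp only [Set.mem_setOf_eq] at *
          rw [hφbiterW, hy, smul_zero] },
      by
        intro i j hij
        induction hij with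
        | refl => exact le_refl _
        | step _ ih =>
          refine le_trans ih ?_
          intro y hy
          exact hmono _ y hy⟩
  obtain ⟨n, hn⟩ := (monotone_stabilizes_iff_noetherian.mpr inferInstance) Kb
  refine ⟨n, fun x hx => ?_⟩
  have h1 : Submodule.Quotient.mk x ∈ Kb (n+1) := by
    show (⇑φb)^[n+1] (Submodule.Quotient.mk x) = 0
    rw [hφbiter]
    rw [Submodule.Quotient.mk_eq_zero]
    exact hx
  have h2 : Submodule.Quotient.mk x ∈ Kb n := by
    rw [hn (n+1) (Nat.le_succ n)]
    exact h1
  have h3 : (⇑φb)^[n] (Submodule.Quotient.mk x) = 0 := h2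
  rw [hφbiter, Submodule.Quotient.mk_eq_zero] at h3
  exact h3

include hφu hφC hφM in
/-- If `A ≤ span(φM '' A)` then `φM` is "injective mod `X`" on `A`. -/
lemma estar [Module.Finite (PowerSeries (WittVector p k)) M]
    (A : Submodule (PowerSeries (WittVector p k)) M)
    (hA : A ≤ Submodule.span (PowerSeries (WittVector p k)) (⇑φM '' (A : Set M)))
    {z : M} (hz : z ∈ A) (hφz : φM z ∈ UU p k M) : z ∈ UU p k M := by
  classical
  obtain ⟨n, hn⟩ := ker_iter_stab φ hφu hφC M φM hφM
  have hz' : z ∈ Submodule.span (PowerSeries (WittVector p k))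
      (⇑(iterM M φM n) '' (A : Set M)) := le_span_iter φ M φM hφM hA n hz
  rw [Submodule.mem_span_set'] at hz'
  obtain ⟨m, c, v, hsum⟩ := hz'
  -- choose preimages in A
  have hv : ∀ i : Fin m, ∃ y : M, y ∈ A ∧ iterM M φM n y = (v i : M) := by
    intro i
    obtain ⟨y, hy, hy2⟩ := (v i).2
    exact ⟨y, hy, hy2⟩
  choose y hyA hyv using hv
  -- decompose coefficients
  have hc : ∀ i : Fin m, ∃ g : PowerSeries (WittVector p k),
      c i = PowerSeries.C (R := WittVector p k) (PowerSeries.constantCoeff (c i))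
        + PowerSeries.X * g := by
    intro i
    obtain ⟨g, hg⟩ : (PowerSeries.X : PowerSeries (WittVector p k)) ∣
        (c i - PowerSeries.C (R := WittVector p k) (PowerSeries.constantCoeff (c i))) := by
      rw [PowerSeries.X_dvd_iff, map_sub, PowerSeries.constantCoeff_C, sub_self]
    exact ⟨g, by rw [← hg]; ring⟩
  choose g hg using hc
  set b : Fin m → WittVector p k := fun i =>
    (⇑(WittVector.frobeniusEquiv p k).symm)^[n] (PowerSeries.constantCoeff (c i)) with hb
  set w : M := ∑ i, PowerSeries.C (R := WittVector p k) (b i) • y i with hw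
  have hwA : w ∈ A := Submodule.sum_mem _ fun i _ => Submodule.smul_mem _ _ (hyA i)
  have hiterw : iterM M φM n w = ∑ i,
      PowerSeries.C (R := WittVector p k) (PowerSeries.constantCoeff (c i)) • (v i : M) := by
    rw [hw, map_sum]
    refine Finset.sum_congr rfl fun i _ => ?_
    rw [iterM_smul φ M φM hφM, iterR_C φ hφC, hb, frob_iter_inv, hyv]
  set h : M := ∑ i, g i • (v i : M) with hh
  have hzw : z = iterM M φM n w + (PowerSeries.X : PowerSeries (WittVector p k)) • h := by
    rw [hiterw, hh, Finset.smul_sum, ← Finset.sum_add_distrib, ← hsum]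
    refine Finset.sum_congr rfl fun i _ => ?_
    rw [smul_smul, ← add_smul, ← hg i]
  have hiter1 : iterM M φM (n+1) w ∈ UU p k M := by
    have : iterM M φM (n+1) w = φM z
        - (PowerSeries.X : PowerSeries (WittVector p k)) ^ p • φM h := by
      rw [iterM_succ, hzw, map_add, hφM, hφu]
      abel
    rw [this]
    exact Submodule.sub_mem _ hφz (pow_smul_mem_UU M (Fact.out : p.Prime).pos _)
  have h2 := hn w hiter1
  rw [hzw]
  exact Submodule.add_mem _ h2 (smul_mem_UU M h)

include hφu hφC hφM in
lemma span_phi_decomp (A : Submodule (PowerSeries (WittVector p k)) M) {y : M}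
    (hy : y ∈ Submodule.span (PowerSeries (WittVector p k)) (⇑φM '' (A : Set M))) :
    ∃ z : ℕ → M, (∀ t, z t ∈ A) ∧
      y = ∑ t ∈ Finset.range p, ((PowerSeries.X : PowerSeries (WittVector p k)) ^ t) • φM (z t) := by
  classical
  rw [Submodule.mem_span_set'] at hy
  obtain ⟨m, c, v, hsum⟩ := hy
  have hv : ∀ i : Fin m, ∃ s : M, s ∈ A ∧ φM s = (v i : M) := by
    intro i
    obtain ⟨s, hs, hs2⟩ := (v i).2
    exact ⟨s, hs, hs2⟩
  choose s hsA hsv using hv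
  have hc : ∀ i : Fin m, ∃ a : ℕ → PowerSeries (WittVector p k),
      c i = ∑ t ∈ Finset.range p, (PowerSeries.X : PowerSeries (WittVector p k)) ^ t * φ (a t) :=
    fun i => phi_decomp φ hφu hφC (c i)
  choose a ha using hc
  refine ⟨fun t => ∑ i, a i t • s i, fun t => Submodule.sum_mem _ fun i _ =>
    Submodule.smul_mem _ _ (hsA i), ?_⟩
  rw [← hsum]
  have key : ∀ i : Fin m, c i • (v i : M)
      = ∑ t ∈ Finset.range p,
        ((PowerSeries.X : PowerSeries (WittVector p k)) ^ t) • φM (a i t • s i) := by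
    intro i
    conv_lhs => rw [ha i]
    rw [Finset.sum_smul]
    refine Finset.sum_congr rfl fun t _ => ?_
    rw [mul_smul, hφM, hsv i]
  calc ∑ i, c i • (v i : M)
      = ∑ i, ∑ t ∈ Finset.range p,
          ((PowerSeries.X : PowerSeries (WittVector p k)) ^ t) • φM (a i t • s i) :=
        Finset.sum_congr rfl (fun i _ => key i)
    _ = ∑ t ∈ Finset.range p, ∑ i,
          ((PowerSeries.X : PowerSeries (WittVector p k)) ^ t) • φM (a i t • s i) :=
        Finset.sum_comm
    _ = ∑ t ∈ Finset.range p,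
          ((PowerSeries.X : PowerSeries (WittVector p k)) ^ t) • φM (∑ i, a i t • s i) := by
        refine Finset.sum_congr rfl fun t _ => ?_
        rw [map_sum, Finset.smul_sum]

variable (p k) in
/-- The colon submodule `(A : X)`. -/
noncomputable def colonX (A : Submodule (PowerSeries (WittVector p k)) M) :
    Submodule (PowerSeries (WittVector p k)) M :=
  A.comap (LinearMap.lsmul (PowerSeries (WittVector p k)) M PowerSeries.X)

lemma mem_colonX {A : Submodule (PowerSeries (WittVector p k)) M} {x : M} :
    x ∈ colonX p k M A ↔ (PowerSeries.X : PowerSeries (WittVector p k)) • x ∈ A := Iff.rfl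

lemma le_colonX (A : Submodule (PowerSeries (WittVector p k)) M) : A ≤ colonX p k M A :=
  fun _ hx => A.smul_mem _ hx

include hφu hφC hφM in
lemma colonX_le_span [Module.Finite (PowerSeries (WittVector p k)) M]
    (htf : ∀ x : M, (PowerSeries.X : PowerSeries (WittVector p k)) • x = 0 → x = 0)
    (A : Submodule (PowerSeries (WittVector p k)) M)
    (hA : A ≤ Submodule.span (PowerSeries (WittVector p k)) (⇑φM '' (A : Set M))) :
    colonX p k M A ≤ Submodule.span (PowerSeries (WittVector p k))
      (⇑φM '' ((colonX p k M A : Submodule (PowerSeries (WittVector p k)) M) : Set M)) := by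
  classical
  have hcan : ∀ a b : M, (PowerSeries.X : PowerSeries (WittVector p k)) • a
      = (PowerSeries.X : PowerSeries (WittVector p k)) • b → a = b := by
    intro a b hab
    have := htf (a - b) (by rw [smul_sub, hab, sub_self])
    exact sub_eq_zero.mp this
  intro x hx
  rw [mem_colonX] at hx
  obtain ⟨z, hzA, hzeq⟩ := span_phi_decomp φ hφu hφC M φM hφM A (hA hx)
  obtain ⟨q, hq⟩ : ∃ q, p = q + 1 := ⟨p - 1, by have := (Fact.out : p.Prime).pos; omega⟩
  rw [congrArg Finset.range hq, Finset.sum_range_succ'] at hzeq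
  rw [pow_zero, one_smul] at hzeq
  set s1 : M := ∑ t ∈ Finset.range q,
    ((PowerSeries.X : PowerSeries (WittVector p k)) ^ t) • φM (z (t+1)) with hs1
  have hsplit : φM (z 0) = (PowerSeries.X : PowerSeries (WittVector p k)) • (x - s1) := by
    have e1 : (PowerSeries.X : PowerSeries (WittVector p k)) • s1
        = ∑ t ∈ Finset.range q,
          ((PowerSeries.X : PowerSeries (WittVector p k)) ^ (t+1)) • φM (z (t+1)) := by
      rw [hs1, Finset.smul_sum]
      refine Finset.sum_congr rfl fun t _ => ?_
      rw [smul_smul, pow_succ']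
    rw [smul_sub, e1, hzeq]
    abel
  have hz0U : z 0 ∈ UU p k M :=
    estar φ hφu hφC M φM hφM A hA (hzA 0) ((mem_UU M).mpr ⟨x - s1, hsplit.symm⟩)
  obtain ⟨w, hw⟩ := (mem_UU M).mp hz0U
  have hwcol : w ∈ colonX p k M A := by rw [mem_colonX, hw]; exact hzA 0
  have hxval : x = s1 + ((PowerSeries.X : PowerSeries (WittVector p k)) ^ q) • φM w := by
    have h1 : φM (z 0) = (PowerSeries.X : PowerSeries (WittVector p k)) •
        (((PowerSeries.X : PowerSeries (WittVector p k)) ^ q) • φM w) := by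
      rw [← hw, hφM, hφu, smul_smul, ← pow_succ',
        ← congrArg (fun n => (PowerSeries.X : PowerSeries (WittVector p k)) ^ n) hq]
    have h2 := hcan _ _ (hsplit.symm.trans h1)
    rw [sub_eq_iff_eq_add] at h2
    rw [h2]
    abel
  rw [hxval]
  refine Submodule.add_mem _ ?_ ?_
  · exact Submodule.sum_mem _ fun t _ => Submodule.smul_mem _ _
      (Submodule.subset_span (Set.mem_image_of_mem _ (le_colonX M A (hzA (t+1)))))
  · exact Submodule.smul_mem _ _
      (Submodule.subset_span (Set.mem_image_of_mem _ hwcol))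

end RingAux

/-- **Lemma 2.3 (lem-multi).** Let `𝔐` be a finitely generated `𝔖`-module with a `φ`-semilinear
endomorphism `φ_𝔐`.  There exists a `φ_𝔐`-stable submodule `𝔐^m ⊆ 𝔐` which is multiplicative
(the `𝔖`-span of `φ_𝔐(𝔐^m)` is all of `𝔐^m`) such that the quotient `𝔐^n = 𝔐/𝔐^m`, with the
induced Frobenius, has no nonzero multiplicative submodule.  Moreover, if `𝔐` is `u`-torsion free
then so are `𝔐^m` and `𝔐^n`. -/
theorem stmt1 (p : ℕ) [Fact p.Prime] (k : Type*) [Field k] [CharP k p] [PerfectField k]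
    (φ : PowerSeries (WittVector p k) →+* PowerSeries (WittVector p k))
    (hφu : φ PowerSeries.X = PowerSeries.X ^ p)
    (hφC : ∀ a : WittVector p k,
      φ (PowerSeries.C (R := WittVector p k) a) = PowerSeries.C (R := WittVector p k) (WittVector.frobenius a))
    (M : Type*) [AddCommGroup M] [Module (PowerSeries (WittVector p k)) M]
    [Module.Finite (PowerSeries (WittVector p k)) M]
    (φM : M →+ M)
    (hφM : ∀ (f : PowerSeries (WittVector p k)) (x : M), φM (f • x) = φ f • φM x) :
    ∃ (Mm : Submodule (PowerSeries (WittVector p k)) M)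
      (φn : (M ⧸ Mm) →+ (M ⧸ Mm)),
      (∀ x ∈ Mm, φM x ∈ Mm) ∧
      Submodule.span (PowerSeries (WittVector p k)) (⇑φM '' (Mm : Set M)) = Mm ∧
      (∀ x : M, φn (Submodule.Quotient.mk x) = Submodule.Quotient.mk (φM x)) ∧
      (∀ Q : Submodule (PowerSeries (WittVector p k)) (M ⧸ Mm),
        Submodule.span (PowerSeries (WittVector p k)) (⇑φn '' (Q : Set (M ⧸ Mm))) = Q → Q = ⊥) ∧
      ((∀ x : M, (PowerSeries.X : PowerSeries (WittVector p k)) • x = 0 → x = 0) →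
        (∀ x ∈ Mm, (PowerSeries.X : PowerSeries (WittVector p k)) • x = (0 : M) → x = 0) ∧
        (∀ y : M ⧸ Mm, (PowerSeries.X : PowerSeries (WittVector p k)) • y = 0 → y = 0)) := by

  classical
  set 𝒮 : Set (Submodule (PowerSeries (WittVector p k)) M) :=
    {N | Submodule.span (PowerSeries (WittVector p k)) (⇑φM '' (N : Set M)) = N} with h𝒮
  set Mm : Submodule (PowerSeries (WittVector p k)) M := sSup 𝒮 with hMmdef
  -- φM-stability of Mm
  have hstab : ∀ x ∈ Mm, φM x ∈ Mm := by
    intro x hx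
    rw [hMmdef, sSup_eq_iSup'] at hx
    refine Submodule.iSup_induction (motive := fun y => φM y ∈ Mm) _ hx ?_ ?_ ?_
    · rintro ⟨N, hN⟩ y hy
      have h1 : φM y ∈ Submodule.span (PowerSeries (WittVector p k)) (⇑φM '' (N : Set M)) :=
        Submodule.subset_span (Set.mem_image_of_mem _ hy)
      rw [hN] at h1
      exact le_sSup hN h1
    · show φM 0 ∈ Mm
      rw [map_zero]; exact Submodule.zero_mem _
    · intro a b ha hb
      show φM (a + b) ∈ Mm
      rw [map_add]; exact Submodule.add_mem _ ha hb
  -- Mm is multiplicative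
  have hmult : Submodule.span (PowerSeries (WittVector p k)) (⇑φM '' (Mm : Set M)) = Mm := by
    refine le_antisymm (Submodule.span_le.mpr ?_) ?_
    · rintro y ⟨x, hx, rfl⟩
      exact hstab x hx
    · conv_lhs => rw [hMmdef]
      refine sSup_le fun N hN => ?_
      conv_lhs => rw [← hN]
      exact Submodule.span_mono (Set.image_mono (le_sSup hN))
  have hmax : ∀ N : Submodule (PowerSeries (WittVector p k)) M,
      Submodule.span (PowerSeries (WittVector p k)) (⇑φM '' (N : Set M)) = N → N ≤ Mm :=
    fun N hN => le_sSup hN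
  -- the induced map on the quotient
  let φs : M →ₛₗ[φ] M := ⟨⟨⇑φM, φM.map_add⟩, fun f x => hφM f x⟩
  let fq : M →ₛₗ[φ] M ⧸ Mm := Mm.mkQ.comp φs
  have hker : Mm ≤ LinearMap.ker fq := by
    intro x hx
    rw [LinearMap.mem_ker]
    show Mm.mkQ (φM x) = 0
    rw [Submodule.mkQ_apply, Submodule.Quotient.mk_eq_zero]
    exact hstab x hx
  let φnl : (M ⧸ Mm) →ₛₗ[φ] (M ⧸ Mm) := Mm.liftQ fq hker
  have hφn : ∀ x : M, φnl (Submodule.Quotient.mk x) = Submodule.Quotient.mk (φM x) :=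
    fun x => rfl
  refine ⟨Mm, φnl.toAddMonoidHom, hstab, hmult, hφn, ?_, ?_⟩
  · -- no nonzero multiplicative submodule in the quotient
    intro Q hQ
    set N : Submodule (PowerSeries (WittVector p k)) M := Q.comap Mm.mkQ with hNdef
    have hMmN : Mm ≤ N := by
      intro x hx
      show Mm.mkQ x ∈ Q
      rw [Submodule.mkQ_apply, (Submodule.Quotient.mk_eq_zero Mm).mpr hx]
      exact Q.zero_mem
    have hNmap : Submodule.map Mm.mkQ N = Q := by
      rw [hNdef, Submodule.map_comap_eq, Submodule.range_mkQ, top_inf_eq]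
    have himg : Submodule.map Mm.mkQ
        (Submodule.span (PowerSeries (WittVector p k)) (⇑φM '' (N : Set M)))
        = Submodule.span (PowerSeries (WittVector p k)) (⇑φnl.toAddMonoidHom '' (Q : Set (M ⧸ Mm))) := by
      rw [Submodule.map_span]
      congr 1
      rw [← hNmap, Submodule.map_coe, Set.image_image, Set.image_image]
      refine Set.image_congr fun x _ => ?_
      rw [Submodule.mkQ_apply, Submodule.mkQ_apply]
      exact (hφn x).symm
    have hNspan : Submodule.span (PowerSeries (WittVector p k)) (⇑φM '' (N : Set M)) ⊔ Mm = N := by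
      have h1 := Submodule.comap_map_eq Mm.mkQ
        (Submodule.span (PowerSeries (WittVector p k)) (⇑φM '' (N : Set M)))
      rw [himg, hQ, Submodule.ker_mkQ] at h1
      exact h1.symm
    have hNmult : Submodule.span (PowerSeries (WittVector p k)) (⇑φM '' (N : Set M)) = N := by
      have hle : Mm ≤ Submodule.span (PowerSeries (WittVector p k)) (⇑φM '' (N : Set M)) := by
        conv_lhs => rw [← hmult]
        exact Submodule.span_mono (Set.image_mono hMmN)
      refine le_antisymm ?_ ?_
      · calc Submodule.span (PowerSeries (WittVector p k)) (⇑φM '' (N : Set M))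
            ≤ Submodule.span (PowerSeries (WittVector p k)) (⇑φM '' (N : Set M)) ⊔ Mm :=
              le_sup_left
          _ = N := hNspan
      · calc N = Submodule.span (PowerSeries (WittVector p k)) (⇑φM '' (N : Set M)) ⊔ Mm :=
              hNspan.symm
          _ ≤ Submodule.span (PowerSeries (WittVector p k)) (⇑φM '' (N : Set M)) :=
              sup_le le_rfl hle
    have hNle : N ≤ Mm := hmax N hNmult
    rw [← hNmap]
    refine le_bot_iff.mp ?_
    rintro y ⟨x, hxN, rfl⟩
    rw [Submodule.mem_bot, Submodule.mkQ_apply, Submodule.Quotient.mk_eq_zero]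
    exact hNle hxN
  · -- torsion-freeness
    intro htf
    refine ⟨fun x _ hx => htf x hx, ?_⟩
    -- the chain of colon submodules
    set Cn : ℕ → Submodule (PowerSeries (WittVector p k)) M := fun n =>
      Mm.comap (LinearMap.lsmul (PowerSeries (WittVector p k)) M (PowerSeries.X ^ n)) with hCn
    have hCmem : ∀ (n : ℕ) (x : M),
        x ∈ Cn n ↔ (PowerSeries.X : PowerSeries (WittVector p k)) ^ n • x ∈ Mm :=
      fun n x => Iff.rfl
    have hC0 : Cn 0 = Mm := by
      ext x
      rw [hCmem, pow_zero, one_smul]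
    have hCsucc : ∀ n : ℕ, Cn (n + 1) = colonX p k M (Cn n) := by
      intro n
      ext x
      rw [hCmem, mem_colonX, hCmem, smul_smul, ← pow_succ]
    have hCspan : ∀ n : ℕ, Cn n ≤ Submodule.span (PowerSeries (WittVector p k))
        (⇑φM '' ((Cn n : Submodule (PowerSeries (WittVector p k)) M) : Set M)) := by
      intro n
      induction n with
      | zero => rw [hC0]; exact le_of_eq hmult.symm
      | succ n ih =>
        rw [hCsucc n]
        exact colonX_le_span φ hφu hφC M φM hφM htf (Cn n) ih
    set T : Submodule (PowerSeries (WittVector p k)) M := ⨆ n, Cn n with hT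
    have hCT : ∀ n, Cn n ≤ T := fun n => le_iSup Cn n
    have hTspan : T ≤ Submodule.span (PowerSeries (WittVector p k)) (⇑φM '' (T : Set M)) := by
      refine iSup_le fun n => le_trans (hCspan n) ?_
      exact Submodule.span_mono (Set.image_mono (hCT n))
    have hTstab : ∀ x ∈ T, φM x ∈ T := by
      intro x hx
      rw [hT] at hx
      refine Submodule.iSup_induction (motive := fun y => φM y ∈ T) _ hx ?_ ?_ ?_
      · intro n y hy
        refine hCT (p * n) ?_
        rw [hCmem]
        have h1 : (PowerSeries.X : PowerSeries (WittVector p k)) ^ (p * n) • φM y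
            = φM ((PowerSeries.X : PowerSeries (WittVector p k)) ^ n • y) := by
          rw [hφM, map_pow, hφu, ← pow_mul]
        rw [h1]
        exact hstab _ ((hCmem n y).mp hy)
      · show φM 0 ∈ T
        rw [map_zero]; exact Submodule.zero_mem _
      · intro a b ha hb
        show φM (a + b) ∈ T
        rw [map_add]; exact Submodule.add_mem _ ha hb
    have hTmult : Submodule.span (PowerSeries (WittVector p k)) (⇑φM '' (T : Set M)) = T := by
      refine le_antisymm (Submodule.span_le.mpr ?_) hTspan
      rintro y ⟨x, hx, rfl⟩
      exact hTstab x hx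
    have hTle : T ≤ Mm := hmax T hTmult
    intro y hy
    obtain ⟨x, rfl⟩ := Submodule.Quotient.mk_surjective Mm y
    rw [← Submodule.Quotient.mk_smul, Submodule.Quotient.mk_eq_zero] at hy
    rw [Submodule.Quotient.mk_eq_zero]
    refine hTle (hCT 1 ?_)
    rw [hCmem, pow_one]
    exact hy
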